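/- β-reduction and η-expansion preserve linearity: if Γ ⊢ t and t reduces to t′ by contracting a β-redex (λx[t₁])(u) ↦ t₁{u/x} occurring in t, then Γ ⊢ t′; and if Γ ⊢ t, then Γ ⊢ λx[t(x)] for any fresh variable x not occurring in Γ or t. -/

import Mathlib

/-! ## Lambda terms and linearity -/

inductive Term : Type
  | var : ℕ → Term
  | app : Term → Term → Term
  | lam : ℕ → Term → Term
deriving DecidableEq

namespace Term

/-- total number of applications and abstractions -/
def size : Term → ℕ
  | var _ => 0
  | app t u => size t + size u + 1
  | lam _ t => size t + 1

def apps : Term → ℕ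
  | var _ => 0
  | app t u => apps t + apps u + 1
  | lam _ t => apps t

def lams : Term → ℕ
  | var _ => 0
  | app t u => lams t + lams u
  | lam _ t => lams t + 1

/-- all variable names occurring in a term (free, bound or binding) -/
def varsList : Term → List ℕ
  | var z => [z]
  | app t u => varsList t ++ varsList u
  | lam z t => z :: varsList t

/-- the list of free variables -/
def freeList : Term → List ℕ
  | var z => [z]
  | app t u => freeList t ++ freeList u
  | lam z t => (freeList t).filter (fun y => y ≠ z)

/-- the list of bound (binder) variables -/
def boundVars : Term → List ℕ
  | var _ => []
  | app t u => boundVars t ++ boundVars u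
  | lam z t => z :: boundVars t

/-- rename the free occurrences of `x` to `y` -/
def rename (x y : ℕ) : Term → Term
  | var z => if z = x then var y else var z
  | app t u => app (rename x y t) (rename x y u)
  | lam z t => if z = x then lam z t else lam z (rename x y t)

/-- substitution of `u` for the free occurrences of `x` -/
def subst (u : Term) (x : ℕ) : Term → Term
  | var z => if z = x then u else var z
  | app t₁ t₂ => app (subst u x t₁) (subst u x t₂)
  | lam z t => if z = x then lam z t else lam z (subst u x t)

end Term

/-- the linearity relation `Γ ⊢ t` between contexts and lambda terms -/
inductive Linear : List ℕ → Term → Prop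
  | var (x : ℕ) : Linear [x] (.var x)
  | app {Γ Δ : List ℕ} {t u : Term} : Linear Γ t → Linear Δ u →
      (Γ ++ Δ).Nodup → Linear (Γ ++ Δ) (.app t u)
  | lam {Γ : List ℕ} {x : ℕ} {t : Term} : Linear (Γ ++ [x]) t → Linear Γ (.lam x t)
  | exch {Γ Δ : List ℕ} {x y : ℕ} {t : Term} :
      Linear (Γ ++ y :: x :: Δ) t → Linear (Γ ++ x :: y :: Δ) t


/-- one-step beta-reduction: contraction of a beta-redex
`(λx[t])(u) ↦ t{u/x}` occurring somewhere in a term (as usual, the bound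
variables of the redex are assumed suitably renamed so that the substitution
is capture-free) -/
inductive Beta : Term → Term → Prop
  | redex {x : ℕ} {t u : Term} :
      (∀ z ∈ Term.freeList u, z ∉ Term.boundVars t) →
      Beta (.app (.lam x t) u) (Term.subst u x t)
  | appL {t t' u : Term} : Beta t t' → Beta (.app t u) (.app t' u)
  | appR {t u u' : Term} : Beta u u' → Beta (.app t u) (.app t u')
  | lam {x : ℕ} {t t' : Term} : Beta t t' → Beta (.lam x t) (.lam x t')

namespace Term

/-- structural linearity predicate -/
def Lin : Term → Prop
  | var _ => True
  | app t u => Lin t ∧ Lin u ∧ ∀ z ∈ freeList t, z ∉ freeList u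
  | lam x t => Lin t ∧ x ∈ freeList t

lemma Lin.nodup : ∀ {t : Term}, Lin t → (freeList t).Nodup
  | var z, _ => List.nodup_singleton z
  | app t u, ⟨ht, hu, hd⟩ => by
      simp only [freeList, List.nodup_append]
      exact ⟨ht.nodup, hu.nodup, fun a ha b hb hab => hd a ha (hab ▸ hb)⟩
  | lam x t, ⟨ht, _⟩ => ht.nodup.filter _

lemma subst_of_not_mem {u : Term} {x : ℕ} :
    ∀ {t : Term}, x ∉ freeList t → subst u x t = t
  | var z, h => by
      simp only [freeList, List.mem_singleton] at h
      have hzx : ¬ (z = x) := fun h' => h h'.symm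
      simp [subst, hzx]
  | app t₁ t₂, h => by
      simp only [freeList, List.mem_append, not_or] at h
      simp only [subst, subst_of_not_mem h.1, subst_of_not_mem h.2]
  | lam z t, h => by
      by_cases hz : z = x
      · simp [subst, hz]
      · simp only [freeList, List.mem_filter] at h
        have hx : x ∉ freeList t := by
          intro hm
          exact h (by simp [hm, Ne.symm hz])
        simp only [subst, if_neg hz, subst_of_not_mem hx]

lemma filter_ne_eq_self {x : ℕ} {l : List ℕ} (h : x ∉ l) :
    l.filter (fun y => y ≠ x) = l :=
  List.filter_eq_self.mpr (by
    intro a ha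
    simp only [decide_eq_true_eq]
    exact fun h' => h (h' ▸ ha))

lemma subst_key {u : Term} {x : ℕ} :
    ∀ {t : Term}, Lin t → Lin u → x ∈ freeList t →
      (∀ z ∈ freeList u, z ∉ boundVars t) →
      (∀ z ∈ freeList u, z ≠ x → z ∉ freeList t) →
      Lin (subst u x t) ∧
        (freeList (subst u x t)).Perm
          (freeList u ++ (freeList t).filter (fun y => y ≠ x))
  | var z, _, hu, hx, _, _ => by
      simp only [freeList, List.mem_singleton] at hx
      subst hx
      simp [subst, hu, freeList]
  | app t₁ t₂, h, hu, hx, hb, hdu => by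
      obtain ⟨h₁, h₂, hd⟩ := h
      simp only [freeList, List.mem_append] at hx
      simp only [boundVars, List.mem_append, not_or] at hb
      have hdu₁ : ∀ z ∈ freeList u, z ≠ x → z ∉ freeList t₁ := by
        intro z hz hne hm
        exact hdu z hz hne (by simp [freeList, hm])
      have hdu₂ : ∀ z ∈ freeList u, z ≠ x → z ∉ freeList t₂ := by
        intro z hz hne hm
        exact hdu z hz hne (by simp [freeList, hm])
      simp only [subst, freeList]
      rcases hx with hx | hx
      · have hx2 : x ∉ freeList t₂ := fun hm => hd x hx hm
        obtain ⟨hl, hp⟩ := subst_key h₁ hu hx (fun z hz => (hb z hz).1) hdu₁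
        rw [show subst u x t₂ = t₂ from subst_of_not_mem hx2]
        constructor
        · refine ⟨hl, h₂, ?_⟩
          intro z hz
          have hmem := hp.mem_iff.mp hz
          simp only [List.mem_append, List.mem_filter, decide_eq_true_eq] at hmem
          rcases hmem with hzu | ⟨hzt, _⟩
          · intro hm
            by_cases hzx : z = x
            · exact hx2 (hzx ▸ hm)
            · exact hdu₂ z hzu hzx hm
          · exact hd z hzt
        · rw [List.filter_append, filter_ne_eq_self hx2]
          refine (hp.append_right _).trans ?_
          rw [List.append_assoc]
      · have hx1 : x ∉ freeList t₁ := fun hm => hd x hm hx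
        obtain ⟨hl, hp⟩ := subst_key h₂ hu hx (fun z hz => (hb z hz).2) hdu₂
        rw [show subst u x t₁ = t₁ from subst_of_not_mem hx1]
        constructor
        · refine ⟨h₁, hl, ?_⟩
          intro z hz hm
          have hmem := hp.mem_iff.mp hm
          simp only [List.mem_append, List.mem_filter, decide_eq_true_eq] at hmem
          rcases hmem with hzu | ⟨hzt, _⟩
          · by_cases hzx : z = x
            · exact hx1 (hzx ▸ hz)
            · exact hdu₁ z hzu hzx hz
          · exact hd z hz hzt
        · rw [List.filter_append, filter_ne_eq_self hx1]
          refine (hp.append_left _).trans ?_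
          rw [← List.append_assoc, ← List.append_assoc]
          exact List.perm_append_comm.append_right _
  | lam z t, h, hu, hx, hb, hdu => by
      obtain ⟨ht, hzt⟩ := h
      simp only [freeList, List.mem_filter, decide_eq_true_eq] at hx
      obtain ⟨hxt, hxz⟩ := hx
      simp only [boundVars] at hb
      have hzu : z ∉ freeList u := fun hm => hb z hm List.mem_cons_self
      have hdu' : ∀ w ∈ freeList u, w ≠ x → w ∉ freeList t := by
        intro w hw hne hm
        have hwz : w ≠ z := fun h' => hzu (h' ▸ hw)
        exact hdu w hw hne (by
          simp only [freeList, List.mem_filter, decide_eq_true_eq]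
          exact ⟨hm, hwz⟩)
      obtain ⟨hl, hp⟩ := subst_key ht hu hxt
        (fun w hw hm => hb w hw (List.mem_cons_of_mem _ hm)) hdu'
      have hzx : ¬ (z = x) := fun h' => hxz h'.symm
      rw [show subst u x (lam z t) = lam z (subst u x t) from by
        simp only [subst, if_neg hzx]]
      constructor
      · refine ⟨hl, ?_⟩
        rw [hp.mem_iff]
        simp only [List.mem_append, List.mem_filter, decide_eq_true_eq]
        exact Or.inr ⟨hzt, Ne.symm hxz⟩
      · simp only [freeList]
        refine (hp.filter _).trans ?_
        rw [List.filter_append, filter_ne_eq_self hzu]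
        simp only [List.filter_filter]
        have hcomm : (fun a => decide (a ≠ z) && decide (a ≠ x)) =
            (fun a : ℕ => decide (a ≠ x) && decide (a ≠ z)) := by
          funext a
          exact Bool.and_comm _ _
        rw [hcomm]

lemma freeList_subset_varsList : ∀ t : Term, freeList t ⊆ varsList t
  | var z => by simp [freeList, varsList]
  | app t u => by
      simp only [freeList, varsList]
      exact List.append_subset.mpr
        ⟨fun a ha => List.mem_append_left _ (freeList_subset_varsList t ha),
         fun a ha => List.mem_append_right _ (freeList_subset_varsList u ha)⟩
  | lam z t => by
      intro a ha
      simp only [freeList] at ha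
      have := List.mem_of_mem_filter ha
      simp only [varsList]
      exact List.mem_cons_of_mem _ (freeList_subset_varsList t this)

lemma perm_filter_cons {x : ℕ} :
    ∀ {l : List ℕ}, l.Nodup → x ∈ l → l.Perm (x :: l.filter (fun y => y ≠ x))
  | [], _, hm => absurd hm List.not_mem_nil
  | a :: l, hnd, hm => by
      rcases List.mem_cons.mp hm with rfl | h
      · have hx : x ∉ l := (List.nodup_cons.mp hnd).1
        have h3 : (x :: l).filter (fun y => y ≠ x) = l := by
          rw [List.filter_cons]
          simp only [ne_eq, decide_not, decide_eq_true_eq]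
          simp [filter_ne_eq_self hx]
          exact fun a ha h' => hx (h' ▸ ha)
        rw [h3]
      · have hax : ¬ (a = x) := fun h' => (List.nodup_cons.mp hnd).1 (h' ▸ h)
        have ih := perm_filter_cons (List.nodup_cons.mp hnd).2 h
        have h3 : (a :: l).filter (fun y => y ≠ x) =
            a :: l.filter (fun y => y ≠ x) := by
          rw [List.filter_cons]
          simp [hax]
        rw [h3]
        exact (ih.cons a).trans (List.Perm.swap x a _)

end Term

open Term List

lemma linear_perm_aux {l₁ l₂ : List ℕ} (h : l₁.Perm l₂) :
    ∀ (S : List ℕ) (t : Term), Linear (S ++ l₁) t → Linear (S ++ l₂) t := by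
  induction h with
  | nil => exact fun _ _ h => h
  | cons x _ ih =>
      intro S t h
      have := ih (S ++ [x]) t (by simpa using h)
      simpa using this
  | swap x y l =>
      intro S t h
      exact Linear.exch h
  | trans _ _ ih1 ih2 =>
      intro S t h
      exact ih2 S t (ih1 S t h)

lemma linear_perm {Γ Δ : List ℕ} {t : Term} (h : Linear Γ t) (hp : Γ.Perm Δ) :
    Linear Δ t := by
  have := linear_perm_aux hp [] t (by simpa using h)
  simpa using this

lemma linear_freeList : ∀ (t : Term), Lin t → Linear (freeList t) t := by
  intro t
  induction t with
  | var z => exact fun _ => Linear.var z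
  | app t u iht ihu =>
      intro h
      obtain ⟨ht, hu, hd⟩ := h
      exact Linear.app (iht ht) (ihu hu) (Lin.nodup (t := Term.app t u) ⟨ht, hu, hd⟩)
  | lam x t ih =>
      rintro ⟨ht, hx⟩
      apply Linear.lam
      apply linear_perm (ih ht)
      refine (Term.perm_filter_cons ht.nodup hx).trans ?_
      exact (List.perm_append_singleton _ _).symm

lemma linear_char {Γ : List ℕ} {t : Term} :
    Linear Γ t ↔ Lin t ∧ Γ.Perm (freeList t) := by
  constructor
  · intro h
    induction h with
    | var x => exact ⟨trivial, List.Perm.refl _⟩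
    | app h1 h2 hnd ih1 ih2 =>
        obtain ⟨l1, p1⟩ := ih1
        obtain ⟨l2, p2⟩ := ih2
        have hperm := p1.append p2
        refine ⟨⟨l1, l2, ?_⟩, hperm⟩
        have hnd' : (freeList _ ++ freeList _).Nodup := hperm.nodup hnd
        rw [List.nodup_append] at hnd'
        exact fun z hz hm => hnd'.2.2 z hz z hm rfl
    | lam h ih =>
        obtain ⟨lt, pt⟩ := ih
        rename_i Γ' x t'
        have hx : x ∈ freeList t' := pt.mem_iff.mp (by simp)
        have hnd : (Γ' ++ [x]).Nodup := pt.symm.nodup lt.nodup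
        have hxΓ : x ∉ Γ' := by
          rw [List.nodup_append] at hnd
          exact fun hm => hnd.2.2 x hm x (by simp) rfl
        refine ⟨⟨lt, hx⟩, ?_⟩
        have hfil := pt.filter (fun y => decide (y ≠ x))
        rw [List.filter_append, Term.filter_ne_eq_self hxΓ] at hfil
        have h2 : ([x] : List ℕ).filter (fun y => y ≠ x) = [] := by simp
        rw [h2, List.append_nil] at hfil
        exact hfil
    | exch h ih =>
        obtain ⟨lt, pt⟩ := ih
        exact ⟨lt, ((List.Perm.swap _ _ _).append_left _).trans pt⟩
  · rintro ⟨hl, hp⟩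
    exact linear_perm (linear_freeList t hl) hp.symm

lemma beta_key {t t' : Term} (h : Beta t t') :
    Lin t → Lin t' ∧ (freeList t').Perm (freeList t) := by
  induction h with
  | redex hb =>
      rename_i x a u
      rintro ⟨⟨ha, hxa⟩, hu, hd⟩
      have hdu : ∀ z ∈ freeList u, z ≠ x → z ∉ freeList a := by
        intro z hz hne hm
        exact hd z (by
          simp only [freeList, List.mem_filter, decide_eq_true_eq]
          exact ⟨hm, hne⟩) hz
      obtain ⟨hl, hp⟩ := Term.subst_key ha hu hxa hb hdu
      refine ⟨hl, hp.trans ?_⟩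
      exact List.perm_append_comm
  | appL _ ih =>
      rintro ⟨ht, hu, hd⟩
      obtain ⟨hl, hp⟩ := ih ht
      exact ⟨⟨hl, hu, fun z hz => hd z (hp.mem_iff.mp hz)⟩, hp.append_right _⟩
  | appR _ ih =>
      rintro ⟨ht, hu, hd⟩
      obtain ⟨hl, hp⟩ := ih hu
      exact ⟨⟨ht, hl, fun z hz hm => hd z hz (hp.mem_iff.mp hm)⟩, hp.append_left _⟩
  | lam _ ih =>
      rintro ⟨ht, hx⟩
      obtain ⟨hl, hp⟩ := ih ht
      exact ⟨⟨hl, hp.symm.mem_iff.mp hx⟩, hp.filter _⟩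


/-- Beta-reduction and eta-expansion preserve linearity: if `Γ ⊢ t` and `t`
reduces to `t'` by contracting a beta-redex then `Γ ⊢ t'`; and if `Γ ⊢ t`
then `Γ ⊢ λx[t(x)]` for any fresh variable `x` not occurring in `Γ` or `t`. -/
theorem beta_eta_preserve_linearity :
    (∀ (Γ : List ℕ) (t t' : Term), Linear Γ t → Beta t t' → Linear Γ t') ∧
    (∀ (Γ : List ℕ) (t : Term) (x : ℕ), Linear Γ t → x ∉ Γ →
      x ∉ Term.varsList t → Linear Γ (.lam x (.app t (.var x)))) := by
  constructor
  · intro Γ t t' hlin hb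
    rw [linear_char] at hlin ⊢
    obtain ⟨hl, hp⟩ := hlin
    obtain ⟨hl', hp'⟩ := beta_key hb hl
    exact ⟨hl', hp.trans hp'.symm⟩
  · intro Γ t x hlin hxΓ hxv
    rw [linear_char] at hlin ⊢
    obtain ⟨hl, hp⟩ := hlin
    have hxf : x ∉ Term.freeList t := fun h => hxv (Term.freeList_subset_varsList t h)
    refine ⟨⟨⟨hl, trivial, ?_⟩, ?_⟩, ?_⟩
    · intro z hz
      simp only [Term.freeList, List.mem_singleton]
      exact fun h => hxf (h ▸ hz)
    · simp [Term.freeList]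
    · show Γ.Perm ((Term.freeList t ++ [x]).filter (fun y => y ≠ x))
      rw [List.filter_append]
      have h1 : (Term.freeList t).filter (fun y => y ≠ x) = Term.freeList t :=
        List.filter_eq_self.mpr (by
          intro a ha
          simp only [decide_eq_true_eq]
          exact fun h => hxf (h ▸ ha))
      have h2 : ([x] : List ℕ).filter (fun y => y ≠ x) = [] := by simp
      rw [h1, h2, List.append_nil]
      exact hp
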